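/- Let M ≥ 1, K ≥ 1 and N ≥ M, and let F ∈ ℂ^{M×N} be the matrix whose j-th column is a_M(j/N) for j = 0, …, N−1. Then for every H ∈ ℂ^{M×K}, ‖H‖_{𝒜_N} = √M · inf { Σ_{j=0}^{N−1} ‖C_{(j,:)}‖₂ : C ∈ ℂ^{N×K}, H = F·C }, i.e. the gridded atomic norm equals √M times the minimum row-wise ℓ_{2,1} norm over all coefficient matrices C representing H through the partial DFT-type matrix F. -/

import Mathlib

open Complex Matrix Pointwise

/-- The steering vector `a_M(f) ∈ ℂ^M`, with entries `exp(2πi·f·m)` for `m = 0, …, M−1`. -/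
noncomputable def steer (M : ℕ) (f : ℝ) : Fin M → ℂ :=
  fun m => Complex.exp (2 * Real.pi * Complex.I * (f : ℂ) * (m : ℂ))

/-- The grid atomic set `𝒜_N ⊆ ℂ^{M×K}` of matrices `M^{−1/2}·a_M(j/N)·u^*` with
`j ∈ {0, …, N−1}` and `‖u‖₂ = 1`. -/
noncomputable def gridAtomicSet (M K N : ℕ) : Set (Matrix (Fin M) (Fin K) ℂ) :=
  {X | ∃ j : Fin N, ∃ u : Fin K → ℂ, (∑ k, ‖u k‖ ^ 2 = 1) ∧
    X = ((Real.sqrt M : ℂ))⁻¹ • Matrix.vecMulVec (steer M ((j : ℝ) / N)) (star u)}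

/-- The gridded atomic norm `‖·‖_{𝒜_N}`: the gauge of the convex hull of `𝒜_N`. -/
noncomputable def gridAtomicNorm (M K N : ℕ) (H : Matrix (Fin M) (Fin K) ℂ) : ℝ :=
  gauge (convexHull ℝ (gridAtomicSet M K N)) H

noncomputable def rnorm {K : ℕ} (v : Fin K → ℂ) : ℝ := Real.sqrt (∑ k, ‖v k‖ ^ 2)

lemma rnorm_eq_norm {K : ℕ} (v : Fin K → ℂ) :
    rnorm v = ‖(WithLp.equiv 2 (Fin K → ℂ)).symm v‖ := by
  rw [EuclideanSpace.norm_eq]; rfl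

lemma rnorm_nonneg {K : ℕ} (v : Fin K → ℂ) : 0 ≤ rnorm v := Real.sqrt_nonneg _

lemma rnorm_zero {K : ℕ} : rnorm (0 : Fin K → ℂ) = 0 := by
  simp [rnorm]

lemma rnorm_smul {K : ℕ} (c : ℂ) (v : Fin K → ℂ) : rnorm (c • v) = ‖c‖ * rnorm v := by
  rw [rnorm_eq_norm, rnorm_eq_norm, show (WithLp.equiv 2 (Fin K → ℂ)).symm (c • v)
    = c • (WithLp.equiv 2 (Fin K → ℂ)).symm v from rfl, norm_smul]

lemma rnorm_smul_real {K : ℕ} (c : ℝ) (v : Fin K → ℂ) : rnorm (c • v) = |c| * rnorm v := by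
  rw [rnorm_eq_norm, rnorm_eq_norm, show (WithLp.equiv 2 (Fin K → ℂ)).symm (c • v)
    = c • (WithLp.equiv 2 (Fin K → ℂ)).symm v from rfl, norm_smul, Real.norm_eq_abs]

lemma rnorm_sum_le {K : ℕ} {ι : Type*} (s : Finset ι) (f : ι → (Fin K → ℂ)) :
    rnorm (∑ i ∈ s, f i) ≤ ∑ i ∈ s, rnorm (f i) := by
  simp only [rnorm_eq_norm]
  rw [show (WithLp.equiv 2 (Fin K → ℂ)).symm (∑ i ∈ s, f i)
    = ∑ i ∈ s, (WithLp.equiv 2 (Fin K → ℂ)).symm (f i) from by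
      induction s using Finset.cons_induction with
      | empty => rfl
      | cons a s ha ih => rw [Finset.sum_cons, Finset.sum_cons, ← ih]; rfl]
  exact norm_sum_le _ _

lemma rnorm_star {K : ℕ} (v : Fin K → ℂ) : rnorm (star v) = rnorm v := by
  simp [rnorm]

lemma steer_pow (M : ℕ) (f : ℝ) (m : Fin M) :
    steer M f m = Complex.exp (2 * Real.pi * Complex.I * (f : ℂ)) ^ (m : ℕ) := by
  rw [steer, ← Complex.exp_nat_mul]; ring_nf

lemma exp_frac_inj {N : ℕ} (hN : 0 < N) {a b : ℕ} (ha : a < N) (hb : b < N)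
    (h : Complex.exp (2 * Real.pi * Complex.I * (((a : ℝ) / N : ℝ) : ℂ))
       = Complex.exp (2 * Real.pi * Complex.I * (((b : ℝ) / N : ℝ) : ℂ))) : a = b := by
  rw [Complex.exp_eq_exp_iff_exists_int] at h
  obtain ⟨n, hn⟩ := h
  have hNc : ((N : ℂ)) ≠ 0 := Nat.cast_ne_zero.mpr hN.ne'
  have hpi : (2 * (Real.pi : ℂ) * Complex.I) ≠ 0 := by
    simp [Real.pi_ne_zero, Complex.I_ne_zero]
  have key : (a : ℂ) = (b : ℂ) + n * N := by
    have h2 : 2 * (Real.pi:ℂ) * Complex.I * ((a:ℂ)/N) =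
        2 * (Real.pi:ℂ) * Complex.I * ((b:ℂ)/N + n) := by
      push_cast at hn ⊢; ring_nf at hn ⊢; linear_combination hn
    have h3 : ((a:ℂ)/N) = ((b:ℂ)/N + n) := mul_left_cancel₀ hpi h2
    field_simp at h3
    linear_combination h3
  have key2 : (a : ℤ) = (b : ℤ) + n * N := by exact_mod_cast key
  have hNz : (0:ℤ) < N := by exact_mod_cast hN
  rcases lt_trichotomy n 0 with h|h|h
  · have : n * (N:ℤ) ≤ -N := by nlinarith
    omega
  · subst h; omega
  · have : (N:ℤ) ≤ n * N := by nlinarith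
    omega

lemma rnorm_eq_zero {K : ℕ} {v : Fin K → ℂ} (h : rnorm v = 0) : v = 0 := by
  funext k
  have h2 : ∑ k, ‖v k‖ ^ 2 = 0 :=
    le_antisymm (Real.sqrt_eq_zero'.mp h) (Finset.sum_nonneg fun k _ => sq_nonneg _)
  have := (Finset.sum_eq_zero_iff_of_nonneg (fun k _ => sq_nonneg ‖v k‖)).mp h2 k (Finset.mem_univ k)
  simpa using pow_eq_zero_iff (n := 2) (by norm_num) |>.mp this

lemma sum_sq_eq_one_of_rnorm_one {K : ℕ} {v : Fin K → ℂ} (h : rnorm v = 1) :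
    ∑ k, ‖v k‖ ^ 2 = 1 := by
  exact Real.sqrt_eq_one.mp h

lemma e0_norm (K : ℕ) (hK : 1 ≤ K) : ∑ k, ‖(Pi.single (⟨0, hK⟩ : Fin K) 1 : Fin K → ℂ) k‖ ^ 2 = 1 := by
  rw [Finset.sum_eq_single (⟨0, hK⟩ : Fin K)]
  · simp
  · intro b _ hb; simp [Pi.single_apply, hb]
  · simp

lemma neg_atom_mem {M K N : ℕ} {X : Matrix (Fin M) (Fin K) ℂ} (h : X ∈ gridAtomicSet M K N) :
    -X ∈ gridAtomicSet M K N := by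
  obtain ⟨j, u, hu, rfl⟩ := h
  refine ⟨j, -u, by simpa using hu, ?_⟩
  rw [← smul_neg]
  congr 1
  ext m k
  simp [Matrix.vecMulVec_apply, Pi.star_apply]

noncomputable def rowMat {N K : ℕ} (j : Fin N) (v : Fin K → ℂ) : Matrix (Fin N) (Fin K) ℂ :=
  Matrix.of (fun j' k => if j' = j then v k else 0)

lemma F_mul_rowMat {M K N : ℕ} (F : Matrix (Fin M) (Fin N) ℂ)
    (hF : ∀ m j, F m j = steer M ((j : ℝ) / N) m) (j : Fin N) (v : Fin K → ℂ) :
    F * rowMat j v = Matrix.vecMulVec (steer M ((j : ℝ) / N)) v := by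
  ext m k
  rw [Matrix.mul_apply, Matrix.vecMulVec_apply, ← hF]
  rw [Finset.sum_eq_single j]
  · simp [rowMat]
  · intro b _ hb; simp [rowMat, hb]
  · simp

lemma rowMat_rowsum {N K : ℕ} (j : Fin N) (v : Fin K → ℂ) :
    ∑ j', rnorm (rowMat j v j') = rnorm v := by
  rw [Finset.sum_eq_single j]
  · congr 1; funext k; simp [rowMat]
  · intro b _ hb
    have : rowMat j v b = 0 := by funext k; simp [rowMat, hb]
    rw [this, rnorm_zero]
  · simp

lemma vecMulVec_smul_right {M K : ℕ} (a : Fin M → ℂ) (c : ℂ) (v : Fin K → ℂ) :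
    Matrix.vecMulVec a (c • v) = c • Matrix.vecMulVec a v := by
  ext m k; simp [Matrix.vecMulVec_apply]; ring

lemma exists_rep (M K N : ℕ) (hM : 1 ≤ M) (hN : M ≤ N)
    (F : Matrix (Fin M) (Fin N) ℂ) (hF : ∀ m j, F m j = steer M ((j : ℝ) / N) m)
    (H : Matrix (Fin M) (Fin K) ℂ) : ∃ C, H = F * C := by
  have hN0 : 0 < N := lt_of_lt_of_le hM hN
  set z : Fin M → ℂ := fun j => Complex.exp (2 * Real.pi * Complex.I * (((j : ℝ) / N : ℝ) : ℂ)) with hz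
  set V : Matrix (Fin M) (Fin M) ℂ := Matrix.of (fun m j => z j ^ (m : ℕ)) with hV
  have hVt : V = (Matrix.vandermonde z)ᵀ := by
    ext m j; simp [hV, Matrix.vandermonde]
  have hdet : V.det ≠ 0 := by
    rw [hVt, Matrix.det_transpose, Matrix.det_vandermonde]
    apply Finset.prod_ne_zero_iff.mpr
    intro i _
    apply Finset.prod_ne_zero_iff.mpr
    intro j hj
    rw [Finset.mem_Ioi] at hj
    intro hzz
    have : (j : ℕ) = (i : ℕ) := by
      apply exp_frac_inj hN0 (lt_of_lt_of_le j.2 hN) (lt_of_lt_of_le i.2 hN)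
      rw [← sub_eq_zero] at hzz
      rw [← sub_eq_zero]
      simpa [hz] using hzz
    exact absurd (Fin.ext this : j = i) (ne_of_gt hj)
  have hunit : IsUnit V.det := Ne.isUnit hdet
  set W : Matrix (Fin M) (Fin K) ℂ := V⁻¹ * H with hW
  refine ⟨Matrix.of (fun j k => if h : (j : ℕ) < M then W ⟨j, h⟩ k else 0), ?_⟩
  ext m k
  show H m k = ∑ j, F m j * (Matrix.of (fun j k => if h : (j : ℕ) < M then W ⟨j, h⟩ k else 0)) j k
  have hterm : ∀ j : Fin N, F m j * (Matrix.of (fun j k => if h : (j : ℕ) < M then W ⟨j, h⟩ k else 0)) j k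
      = (fun n : ℕ => if h : n < M then V m ⟨n, h⟩ * W ⟨n, h⟩ k else 0) (j : ℕ) := by
    intro j
    by_cases h : (j : ℕ) < M
    · simp only [Matrix.of_apply, dif_pos h]
      congr 1
      rw [hF, steer_pow]
      simp [hV, hz]
    · simp [Matrix.of_apply, dif_neg h]
  calc H m k = (V * W) m k := by
        rw [hW, ← Matrix.mul_assoc, Matrix.mul_nonsing_inv V hunit, Matrix.one_mul]
    _ = ∑ i : Fin M, V m i * W i k := Matrix.mul_apply
    _ = ∑ n ∈ Finset.range M, (fun n : ℕ => if h : n < M then V m ⟨n, h⟩ * W ⟨n, h⟩ k else 0) n := by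
        rw [← Fin.sum_univ_eq_sum_range (fun n : ℕ => if h : n < M then V m ⟨n, h⟩ * W ⟨n, h⟩ k else 0) M]
        refine Finset.sum_congr rfl (fun i _ => ?_)
        simp only [dif_pos i.2, Fin.eta]
    _ = ∑ n ∈ Finset.range N, (fun n : ℕ => if h : n < M then V m ⟨n, h⟩ * W ⟨n, h⟩ k else 0) n := by
        refine Finset.sum_subset (Finset.range_subset_range.mpr hN) ?_
        intro x _ hx
        rw [Finset.mem_range, not_lt] at hx
        exact dif_neg (not_lt.mpr hx)
    _ = ∑ j : Fin N, F m j * (Matrix.of (fun j k => if h : (j : ℕ) < M then W ⟨j, h⟩ k else 0)) j k := by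
        rw [← Fin.sum_univ_eq_sum_range (fun n : ℕ => if h : n < M then V m ⟨n, h⟩ * W ⟨n, h⟩ k else 0) N]
        exact Finset.sum_congr rfl (fun j _ => (hterm j).symm)

lemma lemA (M K N : ℕ) (hM : 1 ≤ M) (hK : 1 ≤ K) (hN : M ≤ N)
    (F : Matrix (Fin M) (Fin N) ℂ) (hF : ∀ m j, F m j = steer M ((j : ℝ) / N) m)
    (H : Matrix (Fin M) (Fin K) ℂ) (C : Matrix (Fin N) (Fin K) ℂ) (hHC : H = F * C)
    (t : ℝ) (ht : Real.sqrt M * ∑ j, rnorm (C j) < t) :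
    H ∈ t • convexHull ℝ (gridAtomicSet M K N) := by
  have hN0 : 0 < N := lt_of_lt_of_le hM hN
  set sM : ℝ := Real.sqrt M with hsM
  have hsM0 : 0 < sM := Real.sqrt_pos.mpr (by exact_mod_cast hM)
  have ht0 : 0 < t := lt_of_le_of_lt (mul_nonneg hsM0.le (Finset.sum_nonneg fun j _ => rnorm_nonneg _)) ht
  -- atoms
  set e₀ : Fin K → ℂ := Pi.single (⟨0, hK⟩ : Fin K) 1 with he₀
  set u : Fin N → (Fin K → ℂ) :=
    fun j => if C j = 0 then e₀ else (rnorm (C j))⁻¹ • star (C j) with hu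
  have hu_norm : ∀ j, ∑ k, ‖u j k‖ ^ 2 = 1 := by
    intro j
    by_cases h : C j = 0
    · rw [hu]; simp only [if_pos h]; exact e0_norm K hK
    · rw [hu]; simp only [if_neg h]
      apply sum_sq_eq_one_of_rnorm_one
      rw [rnorm_smul_real, rnorm_star, _root_.abs_of_nonneg (inv_nonneg.mpr (rnorm_nonneg _))]
      have hr : rnorm (C j) ≠ 0 := fun hc => h (rnorm_eq_zero hc)
      field_simp
  set A : Fin N → Matrix (Fin M) (Fin K) ℂ :=
    fun j => ((sM : ℂ))⁻¹ • Matrix.vecMulVec (steer M ((j : ℝ) / N)) (star (u j)) with hA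
  have hA_mem : ∀ j, A j ∈ gridAtomicSet M K N := fun j => ⟨j, u j, hu_norm j, rfl⟩
  set lam : Fin N → ℝ := fun j => sM * rnorm (C j) / t with hlam
  have hlam0 : ∀ j, 0 ≤ lam j := fun j => div_nonneg (mul_nonneg hsM0.le (rnorm_nonneg _)) ht0.le
  have hlam_sum : ∑ j, lam j < 1 := by
    rw [hlam]
    simp only
    rw [← Finset.sum_div, ← Finset.mul_sum]
    exact (div_lt_one ht0).mpr ht
  -- key identity
  have key : ∀ j, lam j • A j = t⁻¹ • Matrix.vecMulVec (steer M ((j : ℝ) / N)) (C j) := by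
    intro j
    by_cases h : C j = 0
    · have : lam j = 0 := by rw [hlam]; simp [h, rnorm_zero]
      rw [this, zero_smul, h]
      have : Matrix.vecMulVec (steer M ((j : ℝ) / N)) (0 : Fin K → ℂ) = 0 := by
        ext m k; simp [Matrix.vecMulVec_apply]
      rw [this, smul_zero]
    · have hr : rnorm (C j) ≠ 0 := fun hc => h (rnorm_eq_zero hc)
      ext m k
      rw [hA]
      simp only [Matrix.smul_apply, Matrix.vecMulVec_apply, Pi.star_apply, hu, if_neg h,
        Pi.smul_apply, star_smul, smul_eq_mul]
      rw [star_star]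
      push_cast
      rw [Complex.real_smul, Complex.real_smul]
      rw [hlam]
      push_cast
      have hsc : (sM : ℂ) ≠ 0 := by exact_mod_cast hsM0.ne'
      have hrc : ((rnorm (C j) : ℝ) : ℂ) ≠ 0 := by exact_mod_cast hr
      have htc : ((t : ℝ) : ℂ) ≠ 0 := by exact_mod_cast ht0.ne'
      have : star ((rnorm (C j) : ℂ))⁻¹ = ((rnorm (C j) : ℂ))⁻¹ := by
        rw [star_inv₀]; congr 1; exact Complex.conj_ofReal _
      field_simp
      rw [star_trivial, Complex.real_smul]
      push_cast
      field_simp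
  -- sum identity
  have sum_id : ∑ j, lam j • A j = t⁻¹ • H := by
    rw [hHC]
    have : ∑ j, lam j • A j = t⁻¹ • ∑ j : Fin N, Matrix.vecMulVec (steer M ((j : ℝ) / N)) (C j) := by
      rw [Finset.smul_sum]
      exact Finset.sum_congr rfl fun j _ => key j
    rw [this]
    congr 1
    ext m k
    rw [Matrix.mul_apply]
    rw [show (∑ j : Fin N, Matrix.vecMulVec (steer M ((j : ℝ) / N)) (C j)) m k
        = ∑ j : Fin N, Matrix.vecMulVec (steer M ((j : ℝ) / N)) (C j) m k from by
      rw [Matrix.sum_apply]]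
    exact Finset.sum_congr rfl fun j _ => by rw [Matrix.vecMulVec_apply, hF]
  -- build the convex combination over Fin N ⊕ Bool
  set j₀ : Fin N := ⟨0, hN0⟩ with hj₀
  set A₀ : Matrix (Fin M) (Fin K) ℂ :=
    ((sM : ℂ))⁻¹ • Matrix.vecMulVec (steer M ((j₀ : ℝ) / N)) (star e₀) with hA₀
  have hA₀_mem : A₀ ∈ gridAtomicSet M K N := ⟨j₀, e₀, e0_norm K hK, rfl⟩
  set r : ℝ := 1 - ∑ j, lam j with hrr
  have hr0 : 0 < r := by rw [hrr]; linarith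
  set w : (Fin N) ⊕ Bool → ℝ := Sum.elim lam (fun _ => r / 2) with hw
  set z : (Fin N) ⊕ Bool → Matrix (Fin M) (Fin K) ℂ :=
    Sum.elim A (fun b => if b then A₀ else -A₀) with hzdef
  have hw0 : ∀ i ∈ (Finset.univ : Finset ((Fin N) ⊕ Bool)), 0 ≤ w i := by
    rintro (j | b) _
    · exact hlam0 j
    · simp [hw]; linarith
  have hw1 : ∑ i, w i = 1 := by
    rw [Fintype.sum_sum_type]
    simp [hw]
    rw [hrr]; ring
  have hz_mem : ∀ i ∈ (Finset.univ : Finset ((Fin N) ⊕ Bool)), z i ∈ gridAtomicSet M K N := by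
    rintro (j | b) _
    · exact hA_mem j
    · cases b
      · exact neg_atom_mem hA₀_mem
      · exact hA₀_mem
  have hcomb : ∑ i, w i • z i = t⁻¹ • H := by
    rw [Fintype.sum_sum_type]
    have hb : ∑ b : Bool, w (Sum.inr b) • z (Sum.inr b) = 0 := by
      simp [hw, hzdef, smul_neg]
    rw [hb, add_zero]
    exact sum_id
  have hmem : t⁻¹ • H ∈ convexHull ℝ (gridAtomicSet M K N) := by
    rw [← hcomb, ← Finset.centerMass_eq_of_sum_1 _ z hw1]
    exact Finset.centerMass_mem_convexHull _ hw0 (by rw [hw1]; norm_num) hz_mem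
  have h2 := Set.smul_mem_smul_set (a := t) hmem
  rwa [smul_inv_smul₀ ht0.ne'] at h2

lemma lemB (M K N : ℕ) (hM : 1 ≤ M) (hK : 1 ≤ K) (hN : M ≤ N)
    (F : Matrix (Fin M) (Fin N) ℂ) (hF : ∀ m j, F m j = steer M ((j : ℝ) / N) m)
    (H : Matrix (Fin M) (Fin K) ℂ) (t : ℝ) (ht : 0 < t)
    (hmem : H ∈ t • convexHull ℝ (gridAtomicSet M K N)) :
    ∃ C : Matrix (Fin N) (Fin K) ℂ, H = F * C ∧ ∑ j, rnorm (C j) ≤ t / Real.sqrt M := by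
  set sM : ℝ := Real.sqrt M with hsM
  have hsM0 : 0 < sM := Real.sqrt_pos.mpr (by exact_mod_cast hM)
  obtain ⟨y, hy, hty⟩ := hmem
  rw [convexHull_eq] at hy
  obtain ⟨ι, s, w, zz, hw0, hw1, hz, hcm⟩ := hy
  have hN0 : 0 < N := lt_of_lt_of_le hM hN
  haveI : Inhabited (Fin N) := ⟨⟨0, hN0⟩⟩
  choose! jf uf hnorm heq using hz
  have hnorm1 : ∀ i ∈ s, rnorm (uf i) = 1 := by
    intro i hi
    rw [rnorm, hnorm i hi, Real.sqrt_one]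
  set C : Matrix (Fin N) (Fin K) ℂ :=
    ∑ i ∈ s, (t * w i) • rowMat (jf i) (((sM : ℂ))⁻¹ • star (uf i)) with hC
  refine ⟨C, ?_, ?_⟩
  · -- H = F * C
    have h1 : F * C = ∑ i ∈ s, (t * w i) • (F * rowMat (jf i) (((sM : ℂ))⁻¹ • star (uf i))) := by
      rw [hC, Matrix.mul_sum]
      exact Finset.sum_congr rfl fun i _ => by rw [Matrix.mul_smul]
    rw [h1]
    have h2 : ∀ i ∈ s, (t * w i) • (F * rowMat (jf i) (((sM : ℂ))⁻¹ • star (uf i)))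
        = (t * w i) • zz i := by
      intro i hi
      rw [F_mul_rowMat F hF, vecMulVec_smul_right, ← heq i hi]
    rw [Finset.sum_congr rfl h2]
    have h3 : ∑ i ∈ s, (t * w i) • zz i = t • ∑ i ∈ s, w i • zz i := by
      rw [Finset.smul_sum]
      exact Finset.sum_congr rfl fun i _ => (smul_smul t (w i) (zz i)).symm
    rw [h3, ← Finset.centerMass_eq_of_sum_1 _ zz hw1, hcm]
    exact (show t • y = H from hty).symm
  · -- row sums
    have hrow : ∀ j : Fin N, rnorm (C j)
        ≤ ∑ i ∈ s, (t * w i) * rnorm (rowMat (jf i) (((sM : ℂ))⁻¹ • star (uf i)) j) := by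
      intro j
      have : C j = ∑ i ∈ s, ((t * w i) • rowMat (jf i) (((sM : ℂ))⁻¹ • star (uf i))) j := by
        rw [hC]; exact Finset.sum_apply _ _ _
      rw [this]
      refine le_trans (rnorm_sum_le s _) (le_of_eq (Finset.sum_congr rfl fun i hi => ?_))
      have : ((t * w i) • rowMat (jf i) (((sM : ℂ))⁻¹ • star (uf i))) j
          = (t * w i) • (rowMat (jf i) (((sM : ℂ))⁻¹ • star (uf i)) j) := rfl
      rw [this, rnorm_smul_real, _root_.abs_of_nonneg (mul_nonneg ht.le (hw0 i hi))]
    calc ∑ j, rnorm (C j)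
        ≤ ∑ j, ∑ i ∈ s, (t * w i) * rnorm (rowMat (jf i) (((sM : ℂ))⁻¹ • star (uf i)) j) :=
          Finset.sum_le_sum fun j _ => hrow j
      _ = ∑ i ∈ s, (t * w i) * ∑ j, rnorm (rowMat (jf i) (((sM : ℂ))⁻¹ • star (uf i)) j) := by
          rw [Finset.sum_comm]
          exact Finset.sum_congr rfl fun i _ => (Finset.mul_sum _ _ _).symm
      _ = ∑ i ∈ s, (t * w i) * sM⁻¹ := by
          refine Finset.sum_congr rfl fun i hi => ?_
          rw [rowMat_rowsum, rnorm_smul, rnorm_star, hnorm1 i hi, mul_one, norm_inv,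
            Complex.norm_real, Real.norm_eq_abs, _root_.abs_of_nonneg hsM0.le]
      _ = t / sM := by
          rw [← Finset.sum_mul, ← Finset.mul_sum, hw1, mul_one, div_eq_mul_inv]

/-- the gridded atomic norm equals `√M` times the minimum row-wise `ℓ_{2,1}`
norm over all coefficient matrices `C ∈ ℂ^{N×K}` with `H = F·C`, where `F ∈ ℂ^{M×N}` is the
partial-DFT-type matrix whose `j`-th column is `a_M(j/N)`. -/
theorem stmt_15 (M K N : ℕ) (hM : 1 ≤ M) (hK : 1 ≤ K) (hN : M ≤ N)
    (F : Matrix (Fin M) (Fin N) ℂ) (hF : ∀ m j, F m j = steer M ((j : ℝ) / N) m)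
    (H : Matrix (Fin M) (Fin K) ℂ) :
    gridAtomicNorm M K N H
      = Real.sqrt M * sInf ((fun C : Matrix (Fin N) (Fin K) ℂ =>
          ∑ j, Real.sqrt (∑ k, ‖C j k‖ ^ 2)) '' {C | H = F * C}) := by
  set sM : ℝ := Real.sqrt M with hsM
  have hsM0 : 0 < sM := Real.sqrt_pos.mpr (by exact_mod_cast hM)
  set S : Set ℝ := (fun C : Matrix (Fin N) (Fin K) ℂ =>
      ∑ j, Real.sqrt (∑ k, ‖C j k‖ ^ 2)) '' {C | H = F * C} with hS
  have hSval : ∀ C : Matrix (Fin N) (Fin K) ℂ, (∑ j, Real.sqrt (∑ k, ‖C j k‖ ^ 2))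
      = ∑ j, rnorm (C j) := fun C => rfl
  obtain ⟨C₀, hC₀⟩ := exists_rep M K N hM hN F hF H
  have hS_ne : S.Nonempty := ⟨_, ⟨C₀, hC₀, rfl⟩⟩
  have hS_bdd : BddBelow S := by
    refine ⟨0, ?_⟩
    rintro x ⟨C, -, rfl⟩
    exact Finset.sum_nonneg fun j _ => rnorm_nonneg _
  have hInf0 : 0 ≤ sInf S := le_csInf hS_ne (by
    rintro x ⟨C, -, rfl⟩
    exact Finset.sum_nonneg fun j _ => rnorm_nonneg _)
  show gauge (convexHull ℝ (gridAtomicSet M K N)) H = sM * sInf S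
  apply le_antisymm
  · -- gauge ≤ sM * sInf S
    refine le_of_forall_gt_imp_ge_of_dense fun a ha => ?_
    have ha0 : 0 < a := lt_of_le_of_lt (mul_nonneg hsM0.le hInf0) ha
    have : sInf S < a / sM := by
      rw [lt_div_iff₀ hsM0]
      linarith [mul_comm sM (sInf S)]
    obtain ⟨x, ⟨C, hHC, rfl⟩, hx⟩ := exists_lt_of_csInf_lt hS_ne this
    have hlt : sM * ∑ j, rnorm (C j) < a := by
      rw [← hSval]
      calc sM * ∑ j, Real.sqrt (∑ k, ‖C j k‖ ^ 2) < sM * (a / sM) :=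
            mul_lt_mul_of_pos_left hx hsM0
        _ = a := by field_simp
    exact gauge_le_of_mem ha0.le (lemA M K N hM hK hN F hF H C hHC a hlt)
  · -- sM * sInf S ≤ gauge
    rw [gauge_def]
    refine le_csInf ⟨sM * (∑ j, rnorm (C₀ j)) + 1, ?_, ?_⟩ ?_
    · exact Set.mem_Ioi.mpr (lt_of_le_of_lt
        (mul_nonneg hsM0.le (Finset.sum_nonneg fun j _ => rnorm_nonneg _)) (lt_add_one _))
    · exact lemA M K N hM hK hN F hF H C₀ hC₀ _ (lt_add_one _)
    · rintro b ⟨hb0, hbm⟩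
      obtain ⟨C, hHC, hsum⟩ := lemB M K N hM hK hN F hF H b hb0 hbm
      have h1 : sInf S ≤ ∑ j, rnorm (C j) := csInf_le hS_bdd ⟨C, hHC, hSval C⟩
      calc sM * sInf S ≤ sM * (b / sM) := mul_le_mul_of_nonneg_left (le_trans h1 hsum) hsM0.le
        _ = b := by field_simp
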